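/- arXiv:1107.2016 — 2 statements merged into one kernel-verified Lean document; each statement's English description precedes it below -/
import Mathlib

section
/- Let h: ℝ^d → [0,∞) be integrable with ∫_0^n ∫_{ℝ^d ∖ [-r,r]^d} h(x) dx dr = o(n) as n → ∞. Then (1/(r_n n^d)) ∫_{[-n,n]^d} ∫_{ℝ^d ∖ [-n,n]^d} h(x-y) dx dy ≤ 2d (2n)^{d-1}/(r_n n^d) · ∫_0^n ∫_{ℝ^d∖[-r,r]^d} h(y) dy dr, where r_n = √(q_n) with q_n = n^{-1}(1 + ∫_0^n ∫_{ℝ^d∖[-r,r]^d} h dx dr); in particular the left-hand side tends to 0 as n → ∞. -/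
open MeasureTheory Set Filter

section Aux
variable {d : ℕ}

/-- integral of h over complement of cube of radius s -/
noncomputable def Gfun (h : EuclideanSpace ℝ (Fin d) → ℝ) (s : ℝ) : ℝ :=
  ∫ x in {x : EuclideanSpace ℝ (Fin d) | ∃ i, s < |x i|}, h x

lemma measCoord (i : Fin d) : Measurable fun x : EuclideanSpace ℝ (Fin d) => x i :=
  (measurable_pi_apply i).comp (PiLp.volume_preserving_ofLp (Fin d)).measurable

lemma measOut (s : ℝ) : MeasurableSet {x : EuclideanSpace ℝ (Fin d) | ∃ i, s < |x i|} := by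
  have : {x : EuclideanSpace ℝ (Fin d) | ∃ i, s < |x i|} = ⋃ i, {x | s < |x i|} := by
    ext x; simp
  rw [this]
  exact MeasurableSet.iUnion fun i =>
    measurableSet_lt measurable_const ((measCoord i).abs)

lemma measCube (n : ℝ) : MeasurableSet {y : EuclideanSpace ℝ (Fin d) | ∀ i, |y i| ≤ n} := by
  have : {y : EuclideanSpace ℝ (Fin d) | ∀ i, |y i| ≤ n} = ⋂ i, {y | |y i| ≤ n} := by
    ext y; simp
  rw [this]
  exact MeasurableSet.iInter fun i =>
    measurableSet_le ((measCoord i).abs) measurable_const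

variable {h : EuclideanSpace ℝ (Fin d) → ℝ}

lemma Gnn (hnn : ∀ x, 0 ≤ h x) (s : ℝ) : 0 ≤ Gfun h s :=
  setIntegral_nonneg (measOut s) fun x _ => hnn x

lemma Gle (hnn : ∀ x, 0 ≤ h x) (hint : Integrable h) (s : ℝ) : Gfun h s ≤ ∫ x, h x :=
  setIntegral_le_integral hint (ae_of_all _ hnn)

lemma Ganti (hnn : ∀ x, 0 ≤ h x) (hint : Integrable h) : Antitone (Gfun h) := by
  intro s t hst
  apply setIntegral_mono_set hint.integrableOn (ae_of_all _ hnn)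
  refine HasSubset.Subset.eventuallyLE ?_
  rintro x ⟨i, hi⟩
  exact ⟨i, lt_of_le_of_lt hst hi⟩

lemma Gmeas (hnn : ∀ x, 0 ≤ h x) (hint : Integrable h) : Measurable (Gfun h) :=
  (Ganti hnn hint).measurable

lemma bdd_integrableOn {α : Type*} [MeasurableSpace α] {μ : Measure α} {f : α → ℝ} {c : ℝ}
    (hf : Measurable f) (hb : ∀ x, |f x| ≤ c) {s : Set α} (hs : μ s ≠ ⊤) :
    IntegrableOn f s μ := by
  have : IsFiniteMeasure (μ.restrict s) :=
    ⟨by rwa [Measure.restrict_apply_univ, lt_top_iff_ne_top]⟩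
  exact (integrable_const c).mono' hf.aestronglyMeasurable
    (ae_of_all _ fun x => by rw [Real.norm_eq_abs]; exact hb x)

end Aux

lemma step1 {d : ℕ} (hd : 0 < d) {h : EuclideanSpace ℝ (Fin d) → ℝ}
    (hnn : ∀ x, 0 ≤ h x) (hint : Integrable h) (n : ℝ) (y : EuclideanSpace ℝ (Fin d)) :
    (∫ x in {x : EuclideanSpace ℝ (Fin d) | ∃ i, n < |x i|}, h (x - y)) ≤
      ∑ i : Fin d, Gfun h (n - |y i|) := by
  have hne : (Finset.univ : Finset (Fin d)).Nonempty := ⟨⟨0, hd⟩, Finset.mem_univ _⟩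
  set m := Finset.univ.inf' hne (fun i => n - |y i|) with hm
  have htrans : ∫ z in ((fun z : EuclideanSpace ℝ (Fin d) => z + y) ⁻¹'
        {x : EuclideanSpace ℝ (Fin d) | ∃ i, n < |x i|}), h z
      = ∫ x in {x : EuclideanSpace ℝ (Fin d) | ∃ i, n < |x i|}, h (x - y) := by
    rw [← (measurePreserving_add_right volume y).setIntegral_preimage_emb
      (MeasurableEquiv.addRight y).measurableEmbedding (fun x => h (x - y)) _]
    simp only [add_sub_cancel_right]
  have hsub : ((fun z : EuclideanSpace ℝ (Fin d) => z + y) ⁻¹'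
        {x : EuclideanSpace ℝ (Fin d) | ∃ i, n < |x i|})
      ⊆ {z : EuclideanSpace ℝ (Fin d) | ∃ i, m < |z i|} := by
    rintro z ⟨i, hi⟩
    refine ⟨i, lt_of_le_of_lt (Finset.inf'_le _ (Finset.mem_univ i)) ?_⟩
    have h1 : |z i + y i| ≤ |z i| + |y i| := abs_add_le _ _
    have hi' : n < |z i + y i| := hi
    linarith
  rw [← htrans]
  have hstep : (∫ z in ((fun z : EuclideanSpace ℝ (Fin d) => z + y) ⁻¹'
        {x : EuclideanSpace ℝ (Fin d) | ∃ i, n < |x i|}), h z) ≤ Gfun h m := by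
    apply setIntegral_mono_set hint.integrableOn (ae_of_all _ hnn)
    exact HasSubset.Subset.eventuallyLE hsub
  refine hstep.trans ?_
  obtain ⟨i₀, -, hi₀⟩ := Finset.exists_mem_eq_inf' hne (fun i => n - |y i|)
  rw [hm, hi₀]
  exact Finset.single_le_sum (f := fun i => Gfun h (n - |y i|)) (fun i _ => Gnn hnn _) (Finset.mem_univ i₀)

lemma step4 {d : ℕ} {h : EuclideanSpace ℝ (Fin d) → ℝ}
    (hnn : ∀ x, 0 ≤ h x) (hint : Integrable h) (n : ℕ) :
    ∫ t in Icc (-(n:ℝ)) (n:ℝ), Gfun h ((n:ℝ) - |t|)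
      = 2 * ∫ t in Ioc (0:ℝ) (n:ℝ), Gfun h t := by
  have hn0 : (0:ℝ) ≤ (n:ℝ) := n.cast_nonneg
  have hφm : Measurable fun t : ℝ => Gfun h ((n:ℝ) - |t|) :=
    (Gmeas hnn hint).comp (measurable_const.sub measurable_abs)
  have hφb : ∀ t : ℝ, |Gfun h ((n:ℝ) - |t|)| ≤ ∫ x, h x := fun t => by
    rw [abs_of_nonneg (Gnn hnn _)]; exact Gle hnn hint _
  have hii : ∀ a b : ℝ, IntervalIntegrable (fun t => Gfun h ((n:ℝ) - |t|)) volume a b := by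
    intro a b
    rw [intervalIntegrable_iff]
    exact bdd_integrableOn hφm hφb measure_Ioc_lt_top.ne
  rw [integral_Icc_eq_integral_Ioc,
    ← intervalIntegral.integral_of_le (by linarith : -(n:ℝ) ≤ (n:ℝ)),
    ← intervalIntegral.integral_add_adjacent_intervals (hii (-(n:ℝ)) 0) (hii 0 (n:ℝ))]
  have e1 : ∫ t in (-(n:ℝ))..0, Gfun h ((n:ℝ) - |t|) = ∫ t in (0:ℝ)..(n:ℝ), Gfun h t := by
    rw [intervalIntegral.integral_congr (g := fun t => Gfun h ((n:ℝ) + t))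
      (fun t ht => by
        rw [uIcc_of_le (by linarith : -(n:ℝ) ≤ 0)] at ht
        rw [abs_of_nonpos ht.2]; ring_nf)]
    rw [intervalIntegral.integral_comp_add_left (Gfun h) (n:ℝ)]
    norm_num
  have e2 : ∫ t in (0:ℝ)..(n:ℝ), Gfun h ((n:ℝ) - |t|) = ∫ t in (0:ℝ)..(n:ℝ), Gfun h t := by
    rw [intervalIntegral.integral_congr (g := fun t => Gfun h ((n:ℝ) - t))
      (fun t ht => by
        rw [uIcc_of_le hn0] at ht
        rw [abs_of_nonneg ht.1])]
    rw [intervalIntegral.integral_comp_sub_left (Gfun h) (n:ℝ)]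
    norm_num
  rw [e1, e2, intervalIntegral.integral_of_le hn0]
  ring

lemma step3 {d : ℕ} {h : EuclideanSpace ℝ (Fin d) → ℝ}
    (hnn : ∀ x, 0 ≤ h x) (hint : Integrable h) (n : ℕ) (i : Fin d) :
    ∫ y in {y : EuclideanSpace ℝ (Fin d) | ∀ j, |y j| ≤ (n:ℝ)}, Gfun h ((n:ℝ) - |y i|)
      = (2*(n:ℝ))^(d-1) * (2 * ∫ t in Ioc (0:ℝ) (n:ℝ), Gfun h t) := by
  have hn0 : (0:ℝ) ≤ (n:ℝ) := n.cast_nonneg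
  set e := (MeasurableEquiv.toLp 2 (Fin d → ℝ)).symm with he
  set C : Set (Fin d → ℝ) := Set.pi Set.univ (fun _ => Icc (-(n:ℝ)) (n:ℝ)) with hC
  have hcube : {y : EuclideanSpace ℝ (Fin d) | ∀ j, |y j| ≤ (n:ℝ)} = e ⁻¹' C := by
    ext y
    simp only [mem_setOf_eq, mem_preimage, hC, Set.mem_univ_pi, mem_Icc]
    constructor
    · intro hy j; have := abs_le.1 (hy j); exact ⟨this.1, this.2⟩
    · intro hy j; exact abs_le.2 ⟨(hy j).1, (hy j).2⟩
  have htrans : ∫ y in e ⁻¹' C, Gfun h ((n:ℝ) - |y i|)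
      = ∫ v in C, Gfun h ((n:ℝ) - |v i|) :=
    (EuclideanSpace.volume_preserving_symm_measurableEquiv_toLp (Fin d)).setIntegral_preimage_emb
      e.measurableEmbedding (fun v => Gfun h ((n:ℝ) - |v i|)) C
  rw [hcube, htrans]
  -- now on the pi space
  set f : Fin d → ℝ → ℝ := Function.update
      (fun _ => (Icc (-(n:ℝ)) (n:ℝ)).indicator (fun _ => (1:ℝ))) i
      ((Icc (-(n:ℝ)) (n:ℝ)).indicator (fun t => Gfun h ((n:ℝ) - |t|))) with hf
  have hCmeas : MeasurableSet C := MeasurableSet.univ_pi (fun _ => measurableSet_Icc)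
  rw [← integral_indicator hCmeas]
  have hpt : ∀ v : Fin d → ℝ,
      C.indicator (fun v => Gfun h ((n:ℝ) - |v i|)) v = ∏ j, f j (v j) := by
    intro v
    by_cases hv : v ∈ C
    · rw [indicator_of_mem hv]
      have hvj : ∀ j, v j ∈ Icc (-(n:ℝ)) (n:ℝ) := fun j => hv j (Set.mem_univ j)
      rw [Finset.prod_eq_single i
        (fun j _ hj => by rw [hf, Function.update_of_ne hj, indicator_of_mem (hvj j)])
        (fun hi => absurd (Finset.mem_univ i) hi)]
      rw [hf, Function.update_self, indicator_of_mem (hvj i)]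
    · rw [indicator_of_notMem hv]
      obtain ⟨j, hj⟩ := by
        simpa only [hC, Set.mem_univ_pi, not_forall] using hv
      refine (Finset.prod_eq_zero (Finset.mem_univ j) ?_).symm
      rcases eq_or_ne j i with rfl | hji
      · rw [hf, Function.update_self, indicator_of_notMem hj]
      · rw [hf, Function.update_of_ne hji, indicator_of_notMem hj]
  simp_rw [hpt]
  rw [MeasureTheory.integral_fintype_prod_volume_eq_prod (ι := Fin d) f]
  rw [← Finset.mul_prod_erase Finset.univ _ (Finset.mem_univ i)]
  have h1 : ∫ x, f i x = ∫ t in Icc (-(n:ℝ)) (n:ℝ), Gfun h ((n:ℝ) - |t|) := by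
    rw [hf, Function.update_self, integral_indicator measurableSet_Icc]
  have h2 : ∀ j ∈ Finset.univ.erase i, (∫ x, f j x) = 2*(n:ℝ) := by
    intro j hj
    rw [hf, Function.update_of_ne (Finset.ne_of_mem_erase hj),
      integral_indicator_const (1:ℝ) measurableSet_Icc, measureReal_def, Real.volume_Icc, smul_eq_mul, mul_one,
      ENNReal.toReal_ofReal (by linarith)]
    ring
  rw [Finset.prod_congr rfl h2, Finset.prod_const,
    Finset.card_erase_of_mem (Finset.mem_univ i), Finset.card_univ, Fintype.card_fin,
    h1, step4 hnn hint n]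
  ring

lemma cube_vol_ne_top {d : ℕ} (n : ℕ) :
    volume {y : EuclideanSpace ℝ (Fin d) | ∀ j, |y j| ≤ (n:ℝ)} ≠ ⊤ := by
  set C : Set (Fin d → ℝ) := Set.pi Set.univ (fun _ => Icc (-(n:ℝ)) (n:ℝ)) with hC
  have hcube : {y : EuclideanSpace ℝ (Fin d) | ∀ j, |y j| ≤ (n:ℝ)}
      = ((MeasurableEquiv.toLp 2 (Fin d → ℝ)).symm) ⁻¹' C := by
    ext y
    simp only [mem_setOf_eq, mem_preimage, hC, Set.mem_univ_pi, mem_Icc]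
    exact forall_congr' fun j => abs_le
  rw [hcube, (EuclideanSpace.volume_preserving_symm_measurableEquiv_toLp (Fin d)).measure_preimage
    (MeasurableSet.univ_pi (fun _ => measurableSet_Icc)).nullMeasurableSet]
  rw [volume_pi_pi]
  exact ENNReal.prod_ne_top fun j _ => by simp [Real.volume_Icc]

lemma core {d : ℕ} (hd : 0 < d) {h : EuclideanSpace ℝ (Fin d) → ℝ}
    (hnn : ∀ x, 0 ≤ h x) (hint : Integrable h) (n : ℕ) :
    (∫ y in {y : EuclideanSpace ℝ (Fin d) | ∀ j, |y j| ≤ (n:ℝ)},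
        (∫ x in {x : EuclideanSpace ℝ (Fin d) | ∃ i, (n:ℝ) < |x i|}, h (x - y)))
      ≤ 2 * (d:ℝ) * (2*(n:ℝ))^(d-1) * ∫ t in Ioc (0:ℝ) (n:ℝ), Gfun h t := by
  have hInt : ∀ i : Fin d, IntegrableOn
      (fun y : EuclideanSpace ℝ (Fin d) => Gfun h ((n:ℝ) - |y i|))
      {y : EuclideanSpace ℝ (Fin d) | ∀ j, |y j| ≤ (n:ℝ)} volume := by
    intro i
    refine bdd_integrableOn (c := ∫ x, h x) ((Gmeas hnn hint).comp
      (measurable_const.sub (measCoord i).abs)) (fun y => ?_) (cube_vol_ne_top n)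
    rw [Function.comp_apply, abs_of_nonneg (Gnn hnn _)]
    exact Gle hnn hint _
  have hmono : (∫ y in {y : EuclideanSpace ℝ (Fin d) | ∀ j, |y j| ≤ (n:ℝ)},
        (∫ x in {x : EuclideanSpace ℝ (Fin d) | ∃ i, (n:ℝ) < |x i|}, h (x - y)))
      ≤ ∫ y in {y : EuclideanSpace ℝ (Fin d) | ∀ j, |y j| ≤ (n:ℝ)},
        (∑ i : Fin d, Gfun h ((n:ℝ) - |y i|)) := by
    refine integral_mono_of_nonneg (ae_of_all _ fun y => ?_)
      (integrable_finset_sum _ fun i _ => hInt i) (ae_of_all _ fun y => ?_)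
    · exact setIntegral_nonneg (measOut (n:ℝ)) fun x _ => hnn _
    · exact step1 hd hnn hint (n:ℝ) y
  refine hmono.trans ?_
  rw [integral_finset_sum _ fun i _ => hInt i]
  have : ∀ i : Fin d, (∫ y in {y : EuclideanSpace ℝ (Fin d) | ∀ j, |y j| ≤ (n:ℝ)},
      Gfun h ((n:ℝ) - |y i|)) = (2*(n:ℝ))^(d-1) * (2 * ∫ t in Ioc (0:ℝ) (n:ℝ), Gfun h t) :=
    fun i => step3 hnn hint n i
  rw [Finset.sum_congr rfl fun i _ => this i, Finset.sum_const, Finset.card_univ,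
    Fintype.card_fin, nsmul_eq_mul]
  ring_nf
  exact le_refl _

/-- For integrable nonnegative `h : ℝ^d → ℝ` with
`∫_0^n ∫_{ℝ^d ∖ [-r,r]^d} h dx dr = o(n)`, setting `q_n = n⁻¹(1 + I n)` and `r_n = √(q_n)`,
the quantity `(r_n n^d)⁻¹ ∫_{[-n,n]^d} ∫_{ℝ^d∖[-n,n]^d} h(x-y) dx dy` is bounded by
`2d (2n)^{d-1} (r_n n^d)⁻¹ I n` and tends to `0`. -/
theorem stmt_4 (d : ℕ) (hd : 0 < d) (h : EuclideanSpace ℝ (Fin d) → ℝ)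
    (hmeas : Measurable h) (hnn : ∀ x, 0 ≤ h x) (hint : Integrable h)
    (I : ℕ → ℝ)
    (hI : ∀ n : ℕ, I n = ∫ r in Ioc (0:ℝ) (n:ℝ),
        (∫ x in {x : EuclideanSpace ℝ (Fin d) | ∃ i, r < |x i|}, h x))
    (hsmall : Tendsto (fun n : ℕ => I n / n) atTop (nhds 0))
    (q r : ℕ → ℝ)
    (hq : ∀ n : ℕ, q n = (1 + I n) / n)
    (hr : ∀ n, r n = Real.sqrt (q n))
    (LHS : ℕ → ℝ)
    (hLHS : ∀ n : ℕ, LHS n = (1 / (r n * (n:ℝ) ^ d)) *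
        ∫ y in {y : EuclideanSpace ℝ (Fin d) | ∀ i, |y i| ≤ (n:ℝ)},
          (∫ x in {x : EuclideanSpace ℝ (Fin d) | ∃ i, (n:ℝ) < |x i|}, h (x - y))) :
    (∀ n : ℕ, 1 ≤ n →
        LHS n ≤ (2 * d * (2 * (n:ℝ)) ^ (d - 1) / (r n * (n:ℝ) ^ d)) * I n) ∧
      Tendsto LHS atTop (nhds 0) := by
  have hIG : ∀ n : ℕ, I n = ∫ t in Ioc (0:ℝ) (n:ℝ), Gfun h t := fun n => hI n
  have hIn : ∀ n : ℕ, 0 ≤ I n := fun n => by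
    rw [hIG n]; exact setIntegral_nonneg measurableSet_Ioc fun t _ => Gnn hnn t
  have hfac : ∀ n : ℕ, (0:ℝ) ≤ 1 / (r n * (n:ℝ)^d) := fun n =>
    one_div_nonneg.2 (mul_nonneg (hr n ▸ Real.sqrt_nonneg _) (pow_nonneg n.cast_nonneg d))
  have part1 : ∀ n : ℕ, 1 ≤ n →
      LHS n ≤ (2 * d * (2 * (n:ℝ)) ^ (d - 1) / (r n * (n:ℝ) ^ d)) * I n := by
    intro n hn
    rw [hLHS n]
    calc (1 / (r n * (n:ℝ)^d)) * _
        ≤ (1 / (r n * (n:ℝ)^d)) *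
          (2 * (d:ℝ) * (2*(n:ℝ))^(d-1) * ∫ t in Ioc (0:ℝ) (n:ℝ), Gfun h t) :=
          mul_le_mul_of_nonneg_left (core hd hnn hint n) (hfac n)
      _ = (2 * d * (2 * (n:ℝ)) ^ (d - 1) / (r n * (n:ℝ) ^ d)) * I n := by
          rw [← hIG n]; ring
  refine ⟨part1, ?_⟩
  have h0 : ∀ n : ℕ, 1 ≤ n → 0 ≤ LHS n := by
    intro n hn
    rw [hLHS n]
    exact mul_nonneg (hfac n) (setIntegral_nonneg (measCube _) fun y _ =>
      setIntegral_nonneg (measOut _) fun x _ => hnn _)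
  have hub : ∀ n : ℕ, 1 ≤ n →
      (2 * (d:ℝ) * (2 * (n:ℝ)) ^ (d - 1) / (r n * (n:ℝ) ^ d)) * I n
        ≤ 2^d * d * Real.sqrt (I n / n) := by
    intro n hn
    have hn0 : (0:ℝ) < n := by exact_mod_cast Nat.lt_of_lt_of_le Nat.zero_lt_one hn
    obtain ⟨k, hk⟩ : ∃ k, d = k + 1 := ⟨d - 1, (Nat.succ_pred_eq_of_pos hd).symm⟩
    set a := I n / n with ha
    have ha0 : 0 ≤ a := div_nonneg (hIn n) hn0.le
    have hra : Real.sqrt a ≤ r n := by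
      rw [hr n, hq n]
      refine Real.sqrt_le_sqrt ?_
      rw [div_le_div_iff₀ hn0 hn0]
      nlinarith [hIn n]
    rcases eq_or_lt_of_le (hIn n) with hI0 | hIpos
    · rw [← hI0, mul_zero, ha, ← hI0]
      positivity
    · have hapos : 0 < a := div_pos hIpos hn0
      have hsq : 0 < Real.sqrt a := Real.sqrt_pos.2 hapos
      have hrpos : 0 < r n := lt_of_lt_of_le hsq hra
      have hnd : (0:ℝ) < (n:ℝ)^d := pow_pos hn0 d
      have step : (2 * (d:ℝ) * (2 * (n:ℝ)) ^ (d - 1) / (r n * (n:ℝ) ^ d)) * I n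
          ≤ (2 * (d:ℝ) * (2 * (n:ℝ)) ^ (d - 1) / (Real.sqrt a * (n:ℝ) ^ d)) * I n := by
        gcongr <;> first | exact hIn n | exact hra | positivity
      refine step.trans (le_of_eq ?_)
      have hu : Real.sqrt a ^ 2 = a := Real.sq_sqrt ha0
      have hIa : I n = Real.sqrt a ^ 2 * n := by rw [hu, ha]; field_simp
      rw [hk]; simp only [Nat.add_sub_cancel]
      rw [hIa, mul_pow, pow_succ]
      field_simp
      ring_nf
  have hg : Tendsto (fun n : ℕ => (2:ℝ)^d * d * Real.sqrt (I n / n)) atTop (nhds 0) := by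
    have h1 : Tendsto (fun n : ℕ => Real.sqrt (I n / n)) atTop (nhds 0) := by
      have h2 := (Real.continuous_sqrt.tendsto 0).comp hsmall
      rw [Real.sqrt_zero] at h2
      exact h2
    have h3 := h1.const_mul ((2:ℝ)^d * (d:ℝ))
    rw [mul_zero] at h3
    exact h3
  exact squeeze_zero' (eventually_atTop.2 ⟨1, h0⟩)
    (eventually_atTop.2 ⟨1, fun n hn => (part1 n hn).trans (hub n hn)⟩) hg
end

section
/- Let H be a complex Hilbert space, A a self-adjoint nonpositive operator that is essentially self-adjoint on a core D₀, and B a densely defined operator on D₀ that is antisymmetric (⟨BF,G⟩ = -⟨F,BG⟩ on D₀) and Kato-bounded by A with relative bound 0 (for every ε > 0 there is C_ε with ‖BF‖ ≤ ε‖AF‖ + C_ε‖F‖ for all F ∈ D₀). Then A + B is essentially m-dissipative on D₀. -/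
open scoped ComplexConjugate

/-- Approximate solvability predicate: every vector can be approximated by the range. -/
private def ApproxRange {E F : Type*} [NormedAddCommGroup F] (f : E → F) : Prop :=
  ∀ (g : F) (ε : ℝ), 0 < ε → ∃ x, ‖f x - g‖ < ε

private lemma dense_iff_approx {E F : Type*} [NormedAddCommGroup F] (f : E → F) :
    Dense (Set.range f) ↔ ApproxRange f := by
  constructor
  · intro h g ε hε
    obtain ⟨b, ⟨x, rfl⟩, hb⟩ := Metric.mem_closure_iff.mp (h g) ε hε
    exact ⟨x, by rwa [norm_sub_rev, ← dist_eq_norm]⟩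
  · intro h g
    rw [Metric.mem_closure_iff]
    intro ε hε
    obtain ⟨x, hx⟩ := h g ε hε
    exact ⟨f x, Set.mem_range_self x, by rwa [dist_eq_norm, norm_sub_rev]⟩

private lemma approx_iter {E F : Type*} [NormedAddCommGroup E] [NormedAddCommGroup F]
    [Module ℂ E] [Module ℂ F] (T P : E →ₗ[ℂ] F) {θ : ℝ} (hθ0 : 0 ≤ θ) (hθ1 : θ ≤ 1)
    (hb : ∀ x, ‖P x‖ ≤ θ * ‖T x‖) (hd : ApproxRange fun x => T x) :
    ∀ (n : ℕ) (g : F) (ε : ℝ), 0 < ε → ∃ x, ‖(T x - P x) - g‖ < θ ^ n * ‖g‖ + ε := by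
  intro n
  induction n with
  | zero =>
    intro g ε hε
    refine ⟨0, ?_⟩
    simp only [map_zero, sub_zero, zero_sub, norm_neg, pow_zero, one_mul]
    linarith
  | succ n ih =>
    intro g ε hε
    obtain ⟨x₀, hx₀⟩ := hd g (ε / 3) (by linarith)
    obtain ⟨x₁, hx₁⟩ := ih (P x₀) (ε / 3) (by linarith)
    refine ⟨x₀ + x₁, ?_⟩
    have hrw : (T (x₀ + x₁) - P (x₀ + x₁)) - g
        = (T x₀ - g) + ((T x₁ - P x₁) - P x₀) := by
      simp only [map_add]; abel
    have h1 : ‖(T (x₀ + x₁) - P (x₀ + x₁)) - g‖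
        ≤ ‖T x₀ - g‖ + ‖(T x₁ - P x₁) - P x₀‖ := by
      rw [hrw]; exact norm_add_le _ _
    have hP : ‖P x₀‖ ≤ θ * (‖g‖ + ε / 3) := by
      have hT : ‖T x₀‖ ≤ ‖g‖ + ε / 3 := by
        have := norm_sub_norm_le (T x₀) g
        linarith [hx₀]
      calc ‖P x₀‖ ≤ θ * ‖T x₀‖ := hb x₀
        _ ≤ θ * (‖g‖ + ε / 3) := mul_le_mul_of_nonneg_left hT hθ0
    have hpown : (0:ℝ) ≤ θ ^ n := pow_nonneg hθ0 n
    have h2 : θ ^ n * ‖P x₀‖ ≤ θ ^ (n + 1) * ‖g‖ + ε / 3 := by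
      have h5 : θ ^ n * ‖P x₀‖ ≤ θ ^ n * (θ * (‖g‖ + ε / 3)) :=
        mul_le_mul_of_nonneg_left hP hpown
      have h3 : θ ^ n * (θ * (‖g‖ + ε / 3)) = θ ^ (n + 1) * ‖g‖ + θ ^ (n + 1) * (ε / 3) := by
        ring
      have h4 : θ ^ (n + 1) * (ε / 3) ≤ ε / 3 := by
        have : θ ^ (n + 1) ≤ 1 := pow_le_one₀ hθ0 hθ1
        nlinarith
      linarith
    linarith

/-- Key perturbation step: if `‖P x‖ ≤ θ ‖T x‖` with `θ < 1` and `T` has dense range,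
then `T - P` has dense range (in the approximate sense). -/
private lemma approx_key {E F : Type*} [NormedAddCommGroup E] [NormedAddCommGroup F]
    [Module ℂ E] [Module ℂ F] (T P : E →ₗ[ℂ] F) {θ : ℝ} (hθ0 : 0 ≤ θ) (hθ1 : θ < 1)
    (hb : ∀ x, ‖P x‖ ≤ θ * ‖T x‖) (hd : ApproxRange fun x => T x) :
    ApproxRange fun x => T x - P x := by
  intro g ε hε
  obtain ⟨n, hn⟩ := exists_pow_lt_of_lt_one (show (0:ℝ) < ε / (2 * (‖g‖ + 1)) by positivity) hθ1
  obtain ⟨x, hx⟩ := approx_iter T P hθ0 hθ1.le hb hd n g (ε / 2) (by linarith)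
  refine ⟨x, lt_of_lt_of_le hx ?_⟩
  have hg : ‖g‖ + 1 > 0 := by positivity
  have : θ ^ n * ‖g‖ ≤ ε / 2 := by
    have h1 : θ ^ n * (‖g‖ + 1) ≤ ε / 2 := by
      have h2 := mul_le_mul_of_nonneg_right hn.le (le_of_lt hg)
      calc θ ^ n * (‖g‖ + 1) ≤ ε / (2 * (‖g‖ + 1)) * (‖g‖ + 1) := h2
        _ = ε / 2 := by field_simp
    nlinarith [pow_nonneg hθ0 n, norm_nonneg g]
  linarith

/-- Dissipativity gives the lower bound `l ‖x‖ ≤ ‖l x - y‖`. -/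
private lemma diss_low {H : Type*} [NormedAddCommGroup H] [InnerProductSpace ℂ H] (x y : H)
    (h : (inner ℂ y x : ℂ).re ≤ 0) {l : ℝ} (hl : 0 < l) :
    l * ‖x‖ ≤ ‖(l:ℂ) • x - y‖ := by
  have h1 : l * ‖x‖ ^ 2 ≤ ((inner ℂ ((l:ℂ) • x - y) x : ℂ)).re := by
    rw [inner_sub_left, inner_smul_left]
    simp only [Complex.sub_re, RingHom.coe_coe, Complex.conj_ofReal, Complex.re_ofReal_mul]
    have : ((inner ℂ x x : ℂ)).re = ‖x‖ ^ 2 := by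
      simpa using inner_self_eq_norm_sq (𝕜 := ℂ) x
    nlinarith
  have h2 : ((inner ℂ ((l:ℂ) • x - y) x : ℂ)).re ≤ ‖(l:ℂ) • x - y‖ * ‖x‖ := by
    exact re_inner_le_norm (𝕜 := ℂ) ((l:ℂ) • x - y) x
  rcases eq_or_lt_of_le (norm_nonneg x) with hx | hx
  · simp [← hx]
  · have h3 := h1.trans h2
    calc l * ‖x‖ = (l * ‖x‖ ^ 2) / ‖x‖ := by field_simp
      _ ≤ (‖(l:ℂ) • x - y‖ * ‖x‖) / ‖x‖ := by gcongr
      _ = ‖(l:ℂ) • x - y‖ := by field_simp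

/-- Dissipativity gives the bound `‖y‖ ≤ ‖l x - y‖`. -/
private lemma diss_high {H : Type*} [NormedAddCommGroup H] [InnerProductSpace ℂ H] (x y : H)
    (h : (inner ℂ y x : ℂ).re ≤ 0) {l : ℝ} (hl : 0 < l) :
    ‖y‖ ≤ ‖(l:ℂ) • x - y‖ := by
  have hsq := norm_sub_sq (𝕜 := ℂ) ((l:ℂ) • x) y
  have hsymm := inner_re_symm (𝕜 := ℂ) x y
  simp only [RCLike.re_to_complex] at hsq hsymm
  have hre : ((inner ℂ ((l:ℂ) • x) y : ℂ)).re = l * ((inner ℂ y x : ℂ)).re := by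
    rw [inner_smul_left]
    simp only [RingHom.coe_coe, Complex.conj_ofReal, Complex.re_ofReal_mul, hsymm]
  rw [hre] at hsq
  nlinarith [norm_nonneg y, norm_nonneg ((l:ℂ) • x - y), sq_nonneg (‖(l:ℂ) • x - y‖ - ‖y‖),
    sq_nonneg ‖(l:ℂ) • x‖]

/-- Perturbation lemma: let `A` be a symmetric nonpositive essentially self-adjoint operator
on a dense domain `D₀` (essential self-adjointness of the nonpositive symmetric `A` being
expressed by density of the range of `1 - A`), and let `B` be antisymmetric on `D₀` and
Kato-bounded by `A` with relative bound `0`. Then `A + B` is essentially m-dissipative on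
`D₀`, i.e. `A + B` is dissipative and `Range(1 - (A+B))` is dense. -/
theorem stmt_7 {H : Type*} [NormedAddCommGroup H] [InnerProductSpace ℂ H]
    [CompleteSpace H]
    (D₀ : Submodule ℂ H) (hdense : Dense (D₀ : Set H))
    (A B : D₀ →ₗ[ℂ] H)
    (hsymm : ∀ F G : D₀, (inner ℂ (A F) (G : H) : ℂ) = inner ℂ (F : H) (A G))
    (hnonpos : ∀ F : D₀, (inner ℂ (A F) (F : H) : ℂ).re ≤ 0)
    (hesa : Dense (Set.range fun F : D₀ => (F : H) - A F))
    (hanti : ∀ F G : D₀, (inner ℂ (B F) (G : H) : ℂ) = -inner ℂ (F : H) (B G))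
    (hkato : ∀ ε : ℝ, 0 < ε → ∃ Cε : ℝ, ∀ F : D₀, ‖B F‖ ≤ ε * ‖A F‖ + Cε * ‖(F : H)‖) :
    (∀ F : D₀, (inner ℂ (A F + B F) (F : H) : ℂ).re ≤ 0) ∧
      Dense (Set.range fun F : D₀ => (F : H) - (A F + B F)) := by
  -- Re ⟪BF, F⟫ = 0 by antisymmetry
  have hBre : ∀ F : D₀, (inner ℂ (B F) (F : H) : ℂ).re = 0 := by
    intro F
    have h2 := congrArg Complex.re (hanti F F)
    simp only [Complex.neg_re] at h2
    have h3 : (inner ℂ (F : H) (B F) : ℂ).re = (inner ℂ (B F) (F : H) : ℂ).re := by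
      rw [← inner_conj_symm ((F : H)) (B F), Complex.conj_re]
    linarith
  -- dissipativity of A + B
  have hABnonpos : ∀ F : D₀, (inner ℂ (A F + B F) (F : H) : ℂ).re ≤ 0 := by
    intro F
    rw [inner_add_left, Complex.add_re]
    have h1 := hnonpos F
    have h2 := hBre F
    linarith
  refine ⟨hABnonpos, ?_⟩
  set J : D₀ →ₗ[ℂ] H := D₀.subtype with hJ
  have happ : ∀ (c : ℝ) (L : D₀ →ₗ[ℂ] H) (F : D₀),
      (((c : ℝ) : ℂ) • J - L) F = ((c : ℝ) : ℂ) • (F : H) - L F := by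
    intro c L F; simp [hJ]
  have happ' : ∀ (c : ℝ) (F : D₀), ((((c : ℝ) : ℂ)) • J) F = ((c : ℝ) : ℂ) • (F : H) := by
    intro c F; simp [hJ]
  -- Step A: dense range of (3/2)^n - A for all n
  have stepA : ∀ n : ℕ, ApproxRange fun F : D₀ => ((((3:ℝ)/2) ^ n : ℝ) : ℂ) • (F : H) - A F := by
    intro n
    induction n with
    | zero =>
      have h0 := (dense_iff_approx _).mp hesa
      intro g ε hε
      obtain ⟨F, hF⟩ := h0 g ε hε
      exact ⟨F, by simpa using hF⟩
    | succ n ih =>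
      set l : ℝ := ((3:ℝ)/2) ^ n with hldef
      have hlpos : 0 < l := by positivity
      have hd : ApproxRange fun x : D₀ => (((l : ℝ) : ℂ) • J - A) x := by
        have heq : (fun x : D₀ => (((l : ℝ) : ℂ) • J - A) x)
            = fun F : D₀ => ((l : ℝ) : ℂ) • (F : H) - A F := funext fun F => happ l A F
        rw [heq]; exact ih
      have hb : ∀ F : D₀, ‖((((-(l/2) : ℝ) : ℂ)) • J) F‖
          ≤ 1/2 * ‖(((l : ℝ) : ℂ) • J - A) F‖ := by
        intro F
        rw [happ, happ']
        have hd1 := diss_low (F : H) (A F) (hnonpos F) hlpos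
        have h1 : ‖((-(l/2) : ℝ) : ℂ) • (F : H)‖ = l/2 * ‖(F : H)‖ := by
          rw [norm_smul, Complex.norm_real, Real.norm_eq_abs]
          rw [abs_of_nonpos (by linarith)]
          ring
        rw [h1]
        linarith
      have key := approx_key (((l : ℝ) : ℂ) • J - A) ((((-(l/2) : ℝ) : ℂ)) • J)
        (θ := 1/2) (by norm_num) (by norm_num) hb hd
      have heq2 : (fun x : D₀ => ((((l : ℝ) : ℂ)) • J - A) x - (((( -(l/2) : ℝ) : ℂ)) • J) x)
          = fun F : D₀ => ((((3:ℝ)/2) ^ (n+1) : ℝ) : ℂ) • (F : H) - A F := by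
        funext F
        rw [happ, happ']
        have hc : ((((3:ℝ)/2) ^ (n+1) : ℝ) : ℂ) = ((l : ℝ) : ℂ) - ((-(l/2) : ℝ) : ℂ) := by
          push_cast [hldef]; ring
        rw [hc, sub_smul]
        abel
      rwa [heq2] at key
  -- Step B: pick the Kato constant and a large l
  obtain ⟨C, hC⟩ := hkato (1/4) (by norm_num)
  set C' : ℝ := max C 0 with hC'
  obtain ⟨n, hn⟩ := pow_unbounded_of_one_lt (R := ℝ) (4 * C') (y := 3/2) (by norm_num)
  set l : ℝ := ((3:ℝ)/2) ^ n with hldef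
  have hl1 : (1:ℝ) ≤ l := one_le_pow₀ (by norm_num)
  have hlpos : (0:ℝ) < l := by linarith
  have hABl : ApproxRange fun F : D₀ => ((l : ℝ) : ℂ) • (F : H) - (A F + B F) := by
    have hd : ApproxRange fun x : D₀ => (((l : ℝ) : ℂ) • J - A) x := by
      have heq : (fun x : D₀ => (((l : ℝ) : ℂ) • J - A) x)
          = fun F : D₀ => ((l : ℝ) : ℂ) • (F : H) - A F := funext fun F => happ l A F
      rw [heq]; exact stepA n
    have hb : ∀ F : D₀, ‖B F‖ ≤ 1/2 * ‖(((l : ℝ) : ℂ) • J - A) F‖ := by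
      intro F
      rw [happ]
      have h1 := hC F
      have h2 := diss_high (F : H) (A F) (hnonpos F) hlpos
      have h3 := diss_low (F : H) (A F) (hnonpos F) hlpos
      have h4 : C * ‖(F : H)‖ ≤ C' * ‖(F : H)‖ :=
        mul_le_mul_of_nonneg_right (le_max_left _ _) (norm_nonneg _)
      have h5 : C' * ‖(F : H)‖ ≤ (1/4) * (l * ‖(F : H)‖) := by
        have h6 : C' ≤ l / 4 := by linarith
        nlinarith [norm_nonneg (F : H)]
      linarith
    have key := approx_key (((l : ℝ) : ℂ) • J - A) B
      (θ := 1/2) (by norm_num) (by norm_num) hb hd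
    have heq2 : (fun x : D₀ => ((((l : ℝ) : ℂ)) • J - A) x - B x)
        = fun F : D₀ => ((l : ℝ) : ℂ) • (F : H) - (A F + B F) := by
      funext F
      rw [happ]
      abel
    rwa [heq2] at key
  -- Step C: come back down to λ = 1
  have hθ0 : (0:ℝ) ≤ (l - 1) / l := div_nonneg (by linarith) (by linarith)
  have hθ1 : (l - 1) / l < 1 := (div_lt_one hlpos).mpr (by linarith)
  have hd : ApproxRange fun x : D₀ => (((l : ℝ) : ℂ) • J - (A + B)) x := by
    have heq : (fun x : D₀ => (((l : ℝ) : ℂ) • J - (A + B)) x)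
        = fun F : D₀ => ((l : ℝ) : ℂ) • (F : H) - (A F + B F) := by
      funext F
      rw [happ]
      simp
    rw [heq]; exact hABl
  have hb : ∀ F : D₀, ‖((((l - 1 : ℝ) : ℂ)) • J) F‖
      ≤ (l - 1) / l * ‖(((l : ℝ) : ℂ) • J - (A + B)) F‖ := by
    intro F
    rw [happ, happ']
    have hAB : (inner ℂ ((A + B) F) ((F : H)) : ℂ).re ≤ 0 := by
      simpa using hABnonpos F
    have h3 := diss_low (F : H) ((A + B) F) hAB hlpos
    have h1 : ‖((l - 1 : ℝ) : ℂ) • (F : H)‖ = (l - 1) * ‖(F : H)‖ := by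
      rw [norm_smul, Complex.norm_real, Real.norm_eq_abs, abs_of_nonneg (by linarith)]
    rw [h1]
    have h4 : (l - 1) / l * (l * ‖(F : H)‖) ≤ (l - 1) / l * ‖((l : ℝ) : ℂ) • (F : H) - (A + B) F‖ :=
      mul_le_mul_of_nonneg_left h3 hθ0
    have h5 : (l - 1) / l * (l * ‖(F : H)‖) = (l - 1) * ‖(F : H)‖ := by
      field_simp
    linarith
  have key := approx_key (((l : ℝ) : ℂ) • J - (A + B)) ((((l - 1 : ℝ) : ℂ)) • J)
    hθ0 hθ1 hb hd
  have heq2 : (fun x : D₀ => ((((l : ℝ) : ℂ)) • J - (A + B)) x - (((l - 1 : ℝ) : ℂ) • J) x)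
      = fun F : D₀ => (F : H) - (A F + B F) := by
    funext F
    rw [happ, happ']
    have hc : ((l : ℝ) : ℂ) = ((l - 1 : ℝ) : ℂ) + 1 := by push_cast; ring
    rw [hc, add_smul, one_smul]
    simp only [LinearMap.add_apply]
    abel
  rw [dense_iff_approx]
  rwa [heq2] at key
end
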